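/- Let M, a ∈ ℝ and m ∈ ℤ. Then the function A_m satisfies the second-order ODE identity Δ(r)·A_m''(r) + 2·(i·a·m − (r−M))·A_m'(r) − 4·A_m(r) = 0 for every r ∈ ℝ. -/

import Mathlib

noncomputable section

/-- `Δ(r) = r² − 2Mr + a²`. -/
def Δk (M a r : ℝ) : ℝ := r^2 - 2*M*r + a^2

/-- The polynomial `A_m(r)` governing the leading-order asymptotics of the spin `+2`
Teukolsky field. -/
def Am (M a : ℝ) (m : ℤ) (r : ℝ) : ℂ :=
  (1/3 : ℂ) * (3 * ((Δk M a r : ℝ) : ℂ)^2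
    + Complex.I * (a : ℂ) * (m : ℂ) * ((r : ℂ) - (M : ℂ)) *
        (4 * ((a : ℂ)^2 - (M : ℂ)^2) + 6 * ((Δk M a r : ℝ) : ℂ))
    - (a : ℂ)^2 * (m : ℂ)^2 *
        (2 * ((Δk M a r : ℝ) : ℂ) + 6 * ((a : ℂ)^2 - (M : ℂ)^2)
          + 4 * ((r : ℂ) - (M : ℂ))^2)
    - 4 * Complex.I * (a : ℂ)^3 * (m : ℂ)^3 * ((r : ℂ) - (M : ℂ))
    + 2 * (a : ℂ)^4 * (m : ℂ)^4)

lemma quartic_hasDerivAt (c0 c1 c2 c3 c4 : ℂ) (r : ℝ) :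
    HasDerivAt (fun r : ℝ => c4*(r:ℂ)^4 + c3*(r:ℂ)^3 + c2*(r:ℂ)^2 + c1*(r:ℂ) + c0)
      (4*c4*(r:ℂ)^3 + 3*c3*(r:ℂ)^2 + 2*c2*(r:ℂ) + c1) r := by
  have h4 : HasDerivAt (fun r : ℝ => ((r:ℂ))^4) (4*(r:ℂ)^3) r := by
    simpa using (hasDerivAt_pow 4 ((r:ℂ))).comp_ofReal
  have h3 : HasDerivAt (fun r : ℝ => ((r:ℂ))^3) (3*(r:ℂ)^2) r := by
    simpa using (hasDerivAt_pow 3 ((r:ℂ))).comp_ofReal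
  have h2 : HasDerivAt (fun r : ℝ => ((r:ℂ))^2) (2*(r:ℂ)) r := by
    simpa using (hasDerivAt_pow 2 ((r:ℂ))).comp_ofReal
  have h1 : HasDerivAt (fun r : ℝ => ((r:ℂ))) (1:ℂ) r := by
    simpa using (hasDerivAt_id ((r:ℂ))).comp_ofReal
  have := (((((h4.const_mul c4).add (h3.const_mul c3)).add
      (h2.const_mul c2)).add (h1.const_mul c1)).add_const c0)
  exact this.congr_deriv (by ring)

lemma deriv_quartic (c0 c1 c2 c3 c4 : ℂ) :
    deriv (fun r : ℝ => c4*(r:ℂ)^4 + c3*(r:ℂ)^3 + c2*(r:ℂ)^2 + c1*(r:ℂ) + c0)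
      = fun r : ℝ => (0:ℂ)*(r:ℂ)^4 + (4*c4)*(r:ℂ)^3 + (3*c3)*(r:ℂ)^2
          + (2*c2)*(r:ℂ) + c1 := by
  funext r
  rw [(quartic_hasDerivAt c0 c1 c2 c3 c4 r).deriv]
  ring

/-- **`A_m` satisfies the ODE `Δ·A_m'' + 2(iam − (r−M))·A_m' − 4·A_m = 0`.** -/
theorem stmt_13 (M a : ℝ) (m : ℤ) :
    ∀ r : ℝ,
      ((Δk M a r : ℝ) : ℂ) * deriv (deriv (Am M a m)) r
        + 2 * (Complex.I * (a : ℂ) * (m : ℂ) - ((r : ℂ) - (M : ℂ))) * deriv (Am M a m) r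
        - 4 * Am M a m r = 0 := by
  intro r
  set J : ℂ := Complex.I * (a : ℂ) * (m : ℂ) with hJ
  have e2 : J^2 = -((a:ℂ)^2*(m:ℂ)^2) := by
    rw [hJ]; rw [mul_pow, mul_pow, Complex.I_sq]; ring
  have e3 : J^3 = -(Complex.I*(a:ℂ)^3*(m:ℂ)^3) := by
    rw [hJ]; rw [mul_pow, mul_pow, pow_succ, Complex.I_sq]; ring
  have e4 : J^4 = (a:ℂ)^4*(m:ℂ)^4 := by
    rw [hJ]; rw [mul_pow, mul_pow, show (4:ℕ) = 2*2 from rfl, pow_mul, Complex.I_sq]; ring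
  set c0 : ℂ := (2/3)*J^4 + (8/3)*(a:ℂ)^2*J^2 + (a:ℂ)^4 - (4/3)*(M:ℂ)*J^3
      - (10/3)*(M:ℂ)*(a:ℂ)^2*J - (2/3)*(M:ℂ)^2*J^2 + (4/3)*(M:ℂ)^3*J with hc0
  set c1 : ℂ := (4/3)*J^3 + (10/3)*(a:ℂ)^2*J - 4*(M:ℂ)*J^2 - 4*(M:ℂ)*(a:ℂ)^2
      + (8/3)*(M:ℂ)^2*J with hc1
  set c2 : ℂ := 2*J^2 + 2*(a:ℂ)^2 - 6*(M:ℂ)*J + 4*(M:ℂ)^2 with hc2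
  set c3 : ℂ := 2*J - 4*(M:ℂ) with hc3
  have hAm : Am M a m = fun r : ℝ =>
      (1:ℂ)*(r:ℂ)^4 + c3*(r:ℂ)^3 + c2*(r:ℂ)^2 + c1*(r:ℂ) + c0 := by
    funext x
    simp only [Am, Δk, hc0, hc1, hc2, hc3, hJ, e2, e3, e4]
    push_cast
    ring_nf
    simp only [show Complex.I^3 = -Complex.I by rw [pow_succ, Complex.I_sq]; ring, Complex.I_sq, Complex.I_pow_four]
    ring
  rw [hAm, deriv_quartic, deriv_quartic]
  simp only [Δk]
  push_cast
  ring
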